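/- There exists a real Banach space X with the r-big slice property (that is, every slice of B_X has radius one) together with a functional φ ∈ X* of norm one such that inf_{α>0} diam(S(B_X,φ,α)) ≤ √2. In particular, the r-big slice property does not imply that every slice of the unit ball has diameter two. -/

import Mathlib

open Metric Set

noncomputable section

variable (X : Type*) [NormedAddCommGroup X] [NormedSpace ℝ X]

/-- A subset `U` of `X` is weakly open if it is open in the weak topology of `X`. -/
def IsWeaklyOpen (U : Set X) : Prop := IsOpen (toWeakSpace ℝ X '' U)

/-- The slice `S(B_X, f, α) = {x ∈ B_X : f x > 1 - α}` of the closed unit ball of `X`. -/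
def sliceSet (f : X →L[ℝ] ℝ) (α : ℝ) : Set X :=
  {y ∈ closedBall (0 : X) 1 | 1 - α < f y}

/-- `S` is a slice of the closed unit ball of `X`, i.e. `S = S(B_X, f, α)` for some norm-one
functional `f` and some `α > 0`. -/
def IsSlice (S : Set X) : Prop :=
  ∃ f : X →L[ℝ] ℝ, ‖f‖ = 1 ∧ ∃ α > (0 : ℝ), S = sliceSet X f α

/-- The Daugavet index of thickness `𝒯ˢ(X)`: the infimum of all `r > 0` such that some slice of
the closed unit ball is contained in a closed ball of radius `r` centered at a point of the unit
sphere. -/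
def Ts : ℝ :=
  sInf {r : ℝ | 0 < r ∧ ∃ x : X, ‖x‖ = 1 ∧ ∃ S : Set X, IsSlice X S ∧ S ⊆ closedBall x r}

/-- `W` is a nonempty relatively weakly open subset of the closed unit ball of `X`. -/
def IsRelWeakOpen (W : Set X) : Prop :=
  W.Nonempty ∧ ∃ U : Set X, IsWeaklyOpen X U ∧ W = closedBall (0 : X) 1 ∩ U

/-- The Daugavet index of thickness `𝒯(X)`: the infimum of all `r > 0` such that some nonempty
relatively weakly open subset of the closed unit ball is contained in a closed ball of radius `r`
centered at a point of the unit sphere. -/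
def Tw : ℝ :=
  sInf {r : ℝ | 0 < r ∧ ∃ x : X, ‖x‖ = 1 ∧ ∃ W : Set X, IsRelWeakOpen X W ∧
    W ⊆ closedBall x r}

/-- The convex combination `∑ i, l i • W i` of the sets `W i` (the set of all sums
`∑ i, l i • w i` with `w i ∈ W i`). -/
def comboSet {n : ℕ} (l : Fin n → ℝ) (W : Fin n → Set X) : Set X :=
  {z : X | ∃ w : Fin n → X, (∀ i, w i ∈ W i) ∧ z = ∑ i, l i • w i}

/-- The Daugavet index of thickness `𝒯ᶜᶜ(X)`: the infimum of all `r > 0` such that some convex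
combination of nonempty relatively weakly open subsets of the closed unit ball is contained in a
closed ball of radius `r` centered at a point of the unit sphere. -/
def Tcc : ℝ :=
  sInf {r : ℝ | 0 < r ∧ ∃ x : X, ‖x‖ = 1 ∧ ∃ (n : ℕ) (l : Fin n → ℝ) (W : Fin n → Set X),
    (∀ i, 0 ≤ l i) ∧ (∑ i, l i) = 1 ∧ (∀ i, IsRelWeakOpen X (W i)) ∧
    comboSet X l W ⊆ closedBall x r}

/-- `X` has the Daugavet property: for every `x` in the unit sphere, every `ε > 0` and every
slice `S` of the closed unit ball there exists `y ∈ S` with `‖x - y‖ ≥ 2 - ε`. -/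
def DaugavetProperty : Prop :=
  ∀ x : X, ‖x‖ = 1 → ∀ ε > (0 : ℝ), ∀ S : Set X, IsSlice X S → ∃ y ∈ S, 2 - ε ≤ ‖x - y‖

/-- The radius of a set `C`: the infimum of all `r > 0` such that `C` is contained in a closed
ball of radius `r`. -/
def radiusSet (C : Set X) : ℝ :=
  sInf {r : ℝ | 0 < r ∧ ∃ x : X, C ⊆ closedBall x r}

section ConstructionNamespaceX
open BoundedContinuousFunction
abbrev CZ := ZeroAtInftyContinuousMap ℕ ℝ
def XX : Type := ℝ × CZ
instance : AddCommGroup XX := inferInstanceAs (AddCommGroup (ℝ × CZ))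
instance : Module ℝ XX := inferInstanceAs (Module ℝ (ℝ × CZ))
def bd (p : XX) : ℕ →ᵇ ℝ := BoundedContinuousFunction.const ℕ p.1 + p.2.toBCF
@[simp] lemma bd_apply (p : XX) (n : ℕ) : bd p n = p.1 + p.2 n := rfl
lemma pfst_add (p q : XX) : (p + q).1 = p.1 + q.1 := rfl
lemma psnd_add (p q : XX) (n : ℕ) : (p + q).2 n = p.2 n + q.2 n := rfl
lemma pfst_smul (c : ℝ) (p : XX) : (c • p).1 = c * p.1 := rfl
lemma psnd_smul (c : ℝ) (p : XX) (n : ℕ) : (c • p).2 n = c * p.2 n := rfl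
lemma bd_add (p q : XX) : bd (p + q) = bd p + bd q := by
  ext n; simp [pfst_add, psnd_add]; ring
lemma bd_smul (c : ℝ) (p : XX) : bd (c • p) = c • bd p := by
  ext n; simp [pfst_smul, psnd_smul]; ring
@[simp] lemma bd_zero : bd 0 = 0 := by ext n; simp [bd]; exact add_zero (0:ℝ)

lemma pfst_sub (p q : XX) : (p - q).1 = p.1 - q.1 := rfl
lemma psnd_sub (p q : XX) (n : ℕ) : (p - q).2 n = p.2 n - q.2 n := rfl

lemma bd_sub (p q : XX) : bd (p - q) = bd p - bd q := by
  ext n; simp [pfst_sub, psnd_sub]; ring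

-- p.2 tends to 0 at infinity
lemma tendsto_snd (p : XX) : Filter.Tendsto (fun n => p.2 n) Filter.atTop (nhds 0) := by
  have := zero_at_infty p.2
  rwa [cocompact_eq_atTop] at this

lemma abs_fst_le (p : XX) : |p.1| ≤ ‖bd p‖ := by
  by_contra h
  push_neg at h
  obtain ⟨n, hn⟩ := ((tendsto_snd p).eventually
    (eventually_abs_sub_lt 0 (by linarith [abs_nonneg p.1, norm_nonneg (bd p)] : (0:ℝ) < |p.1| - ‖bd p‖))).exists
  have h2 : |bd p n| ≤ ‖bd p‖ := by
    simpa [Real.norm_eq_abs] using (bd p).norm_coe_le_norm n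
  simp only [bd_apply] at h2
  rw [sub_zero] at hn
  have : |p.1| - |p.2 n| ≤ |p.1 + p.2 n| := by
    have := abs_sub_abs_le_abs_sub (p.1) (-(p.2 n))
    simpa [abs_neg] using abs_sub_abs_le_abs_sub p.1 (-(p.2 n))
  linarith [this, h2, hn]

def sq2 : ℝ := Real.sqrt 2
lemma sq2_pos : 0 < sq2 := Real.sqrt_pos.2 (by norm_num)
lemma sq2_sq : sq2 * sq2 = 2 := Real.mul_self_sqrt (by norm_num)

def nrmX (p : XX) : ℝ := (‖bd p‖ + |p.1|) / sq2

instance : NormedAddCommGroup XX :=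
  AddGroupNorm.toNormedAddCommGroup
  { toFun := nrmX
    map_zero' := by simp [nrmX]; exact Or.inl rfl
    add_le' := fun p q => by
      have h1 := norm_add_le (bd p) (bd q)
      have h2 := abs_add_le p.1 q.1
      have : bd (p+q) = bd p + bd q := bd_add p q
      simp only [nrmX, this, pfst_add]
      rw [← add_div, div_le_div_iff_of_pos_right sq2_pos]
      calc ‖bd p + bd q‖ + |p.1 + q.1| ≤ (‖bd p‖ + ‖bd q‖) + (|p.1| + |q.1|) := by
            exact add_le_add h1 h2
        _ = ‖bd p‖ + |p.1| + (‖bd q‖ + |q.1|) := by ring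
    neg' := fun p => by
      have h2 : (-p).1 = -p.1 := rfl
      have h3 : ∀ n, (-p).2 n = -(p.2 n) := fun n => rfl
      have h : bd (-p) = -(bd p) := by ext n; simp [h2, h3]; ring
      simp [nrmX, h, h2]
    eq_zero_of_map_eq_zero' := fun p hp => by
      have h0 : 0 ≤ ‖bd p‖ := norm_nonneg _
      have h1 : 0 ≤ |p.1| := abs_nonneg _
      have : ‖bd p‖ + |p.1| = 0 := by
        have := (div_eq_zero_iff.1 hp).resolve_right sq2_pos.ne'
        exact this
      have hb : ‖bd p‖ = 0 := by linarith
      have ht : p.1 = 0 := by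
        have := abs_fst_le p; rw [hb] at this
        exact abs_eq_zero.1 (le_antisymm (by linarith) h1)
      have hy : p.2 = 0 := by
        have : bd p = 0 := norm_eq_zero.1 hb
        ext n
        have := congrArg (fun f => f n) this
        simpa [ht] using this
      have : p = (p.1, p.2) := rfl
      rw [this, ht, hy]
      rfl }

lemma Xnorm_def (p : XX) : ‖p‖ = (‖bd p‖ + |p.1|) / sq2 := rfl

instance : NormedSpace ℝ XX where
  norm_smul_le c p := by
    rw [Xnorm_def, Xnorm_def, bd_smul, pfst_smul]
    rw [norm_smul c (bd p), abs_mul, Real.norm_eq_abs]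
    have : |c| * ((‖bd p‖ + |p.1|) / sq2) = (|c| * ‖bd p‖ + |c| * |p.1|) / sq2 := by
      field_simp
    rw [this]

lemma norm_bd_le (p : XX) : ‖bd p‖ ≤ |p.1| + ‖p.2‖ := by
  calc ‖bd p‖ ≤ ‖BoundedContinuousFunction.const ℕ p.1‖ + ‖p.2.toBCF‖ := norm_add_le _ _
    _ = |p.1| + ‖p.2‖ := by
        rw [ZeroAtInftyContinuousMap.norm_toBCF_eq_norm]
        congr 1
        rw [BoundedContinuousFunction.norm_const_eq _]
        exact Real.norm_eq_abs _

lemma snd_norm_le (p : XX) : ‖p.2‖ ≤ ‖bd p‖ + |p.1| := by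
  rw [← ZeroAtInftyContinuousMap.norm_toBCF_eq_norm]
  have : p.2.toBCF = bd p - BoundedContinuousFunction.const ℕ p.1 := by
    ext n; simp [bd]
  rw [this]
  calc ‖bd p - BoundedContinuousFunction.const ℕ p.1‖
      ≤ ‖bd p‖ + ‖BoundedContinuousFunction.const ℕ p.1‖ := norm_sub_le _ _
    _ ≤ ‖bd p‖ + |p.1| := by
        rw [BoundedContinuousFunction.norm_const_eq _, Real.norm_eq_abs]

-- continuity bounds vs product norm
lemma norm_le_prod (p : XX) : ‖p‖ ≤ 3 / sq2 * max |p.1| ‖p.2‖ := by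
  rw [Xnorm_def, div_mul_eq_mul_div, div_le_div_iff_of_pos_right sq2_pos]
  have h1 := norm_bd_le p
  have h2 : |p.1| ≤ max |p.1| ‖p.2‖ := le_max_left _ _
  have h3 : ‖p.2‖ ≤ max |p.1| ‖p.2‖ := le_max_right _ _
  linarith

lemma prod_le_norm (p : XX) : max |p.1| ‖p.2‖ ≤ 2 * sq2 * ‖p‖ := by
  have key : ‖bd p‖ + |p.1| = sq2 * ‖p‖ := by
    rw [Xnorm_def, mul_div_cancel₀ _ sq2_pos.ne']
  have h1 := abs_fst_le p
  have h2 := snd_norm_le p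
  have h3 : 0 ≤ ‖bd p‖ := norm_nonneg _
  have hn : 0 ≤ ‖p‖ := norm_nonneg _
  apply max_le <;> nlinarith [sq2_pos]

lemma XX_dist (p q : XX) : dist p q = ‖p - q‖ := dist_eq_norm p q

def fP : XX → ℝ × CZ := fun p => p
def gP : ℝ × CZ → XX := fun p => p

lemma fP_norm (p : XX) : ‖fP p‖ = max |p.1| ‖p.2‖ := by
  rw [Prod.norm_def]; rfl

lemma gP_norm (p : ℝ × CZ) : ‖p‖ = max |(gP p).1| ‖(gP p).2‖ := by
  rw [Prod.norm_def]; rfl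

def eqv : XX ≃ᵤ (ℝ × CZ) where
  toFun := fP
  invFun := gP
  left_inv := fun p => rfl
  right_inv := fun p => rfl
  uniformContinuous_toFun := by
    apply LipschitzWith.uniformContinuous (K := (2 * sq2).toNNReal)
    apply LipschitzWith.of_dist_le_mul
    intro p q
    have h1 : dist (fP p) (fP q) = ‖fP p - fP q‖ := dist_eq_norm _ _
    have h2 : fP p - fP q = fP (p - q) := rfl
    rw [h1, h2, fP_norm, dist_eq_norm, Real.coe_toNNReal _ (by have := sq2_pos; positivity)]
    exact prod_le_norm (p - q)
  uniformContinuous_invFun := by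
    apply LipschitzWith.uniformContinuous (K := (3 / sq2).toNNReal)
    apply LipschitzWith.of_dist_le_mul
    intro p q
    have h1 : dist (gP p) (gP q) = ‖gP p - gP q‖ := dist_eq_norm _ _
    have h2 : gP p - gP q = gP (p - q) := rfl
    show dist (gP p) (gP q) ≤ _
    rw [h1, h2, dist_eq_norm, Real.coe_toNNReal _ (by have := sq2_pos; positivity), gP_norm (p - q)]
    exact norm_le_prod (gP (p - q))

instance : CompleteSpace XX := eqv.completeSpace_iff.2 inferInstance

instance : Nontrivial XX := ⟨(0:XX), ((1:ℝ), (0:CZ)), by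
  intro h
  have := congrArg (fun p : XX => p.1) h
  simp at this
  exact zero_ne_one (α := ℝ) this⟩

-- single point bump in CZ
def en (n : ℕ) : CZ :=
  { toFun := fun m => if m = n then (1:ℝ) else 0
    continuous_toFun := continuous_of_discreteTopology
    zero_at_infty' := by
      rw [cocompact_eq_atTop]
      apply Filter.Tendsto.congr' (f₁ := fun _ => (0:ℝ))
      · filter_upwards [Filter.eventually_gt_atTop n] with m hm
        show (0:ℝ) = if m = n then (1:ℝ) else 0
        rw [if_neg (Nat.ne_of_gt hm)]
      · exact tendsto_const_nhds }

@[simp] lemma en_apply (n m : ℕ) : en n m = if m = n then (1:ℝ) else 0 := rfl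

lemma mem_ball_iff (p : XX) : p ∈ Metric.closedBall (0:XX) 1 ↔ ‖bd p‖ + |p.1| ≤ sq2 := by
  rw [Metric.mem_closedBall, dist_zero_right, Xnorm_def, div_le_one sq2_pos]

def zen (n : ℕ) : XX := ((0:ℝ), en n)

@[simp] lemma zen_fst (n : ℕ) : (zen n).1 = 0 := rfl
@[simp] lemma zen_snd (n m : ℕ) : (zen n).2 m = if m = n then (1:ℝ) else 0 := rfl

def uvec : XX := ((sq2/2 : ℝ), (0:CZ))

def φ₀ : XX →L[ℝ] ℝ :=
  LinearMap.mkContinuous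
    { toFun := fun p => sq2 * p.1
      map_add' := fun p q => by show sq2 * (p+q).1 = _; rw [pfst_add]; ring
      map_smul' := fun c p => by show sq2 * (c • p).1 = _; rw [pfst_smul]; simp; ring }
    1
    (by
      intro p
      show ‖sq2 * p.1‖ ≤ 1 * ‖p‖
      rw [Real.norm_eq_abs]
      have h1 := abs_fst_le p
      have h2 : |sq2 * p.1| = sq2 * |p.1| := by
        rw [abs_mul, abs_of_pos sq2_pos]
      rw [h2, Xnorm_def, one_mul, le_div_iff₀ sq2_pos]
      nlinarith [sq2_sq, abs_nonneg p.1])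

@[simp] lemma φ₀_apply (p : XX) : φ₀ p = sq2 * p.1 := rfl

lemma φ₀_norm : ‖φ₀‖ = 1 := by
  apply le_antisymm
  · exact LinearMap.mkContinuous_norm_le _ zero_le_one _
  · have hu : ‖uvec‖ = 1 := by
      rw [Xnorm_def]
      have hb : bd uvec = BoundedContinuousFunction.const ℕ (sq2/2) := by
        ext n; simp [bd, uvec]
      have h3 : uvec.1 = sq2/2 := rfl
      rw [hb, h3, BoundedContinuousFunction.norm_const_eq _, Real.norm_eq_abs,
        abs_of_pos (by linarith [sq2_pos] : (0:ℝ) < sq2/2)]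
      rw [div_eq_one_iff_eq sq2_pos.ne']
      ring
    have h := φ₀.le_opNorm uvec
    rw [hu, mul_one, φ₀_apply, Real.norm_eq_abs] at h
    have h3 : uvec.1 = sq2/2 := rfl
    rw [h3] at h
    have h2 : sq2 * (sq2/2) = 1 := by nlinarith [sq2_sq]
    rw [h2] at h
    simpa using h

def Lbd : XX →ₗ[ℝ] (ℕ →ᵇ ℝ) :=
  { toFun := bd
    map_add' := bd_add
    map_smul' := bd_smul }

lemma bd_smul_zen (c : ℝ) (n m : ℕ) : bd (c • zen n) m = if m = n then c else 0 := by
  rw [bd_apply, pfst_smul, psnd_smul]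
  simp

def fstL : XX →ₗ[ℝ] ℝ :=
  { toFun := fun p => p.1
    map_add' := fun p q => pfst_add p q
    map_smul' := fun c p => by show (c • p).1 = _; rw [pfst_smul]; simp }

lemma sum_b_le (f : XX →L[ℝ] ℝ) (hf : ‖f‖ = 1) (F : Finset ℕ) :
    ∑ n ∈ F, |f (zen n)| ≤ 1 / sq2 := by
  classical
  set s : ℕ → ℝ := fun n => if 0 ≤ f (zen n) then (1:ℝ) else -1 with hs
  set u : XX := ∑ n ∈ F, s n • zen n with hu
  have hfu : f u = ∑ n ∈ F, |f (zen n)| := by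
    rw [hu, map_sum]
    apply Finset.sum_congr rfl
    intro n _
    rw [map_smul]
    by_cases h : 0 ≤ f (zen n)
    · rw [hs]; simp [h, abs_of_nonneg h]
    · rw [hs]; simp [h, abs_of_neg (lt_of_not_ge h)]
  have hbu : ∀ m, bd u m = if m ∈ F then s m else 0 := by
    intro m
    have : bd u = ∑ n ∈ F, bd (s n • zen n) := by
      rw [hu]
      exact map_sum Lbd _ F
    rw [this]
    rw [BoundedContinuousFunction.coe_sum, Finset.sum_apply]
    have : ∀ n ∈ F, bd (s n • zen n) m = if m = n then s n else 0 := fun n _ => by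
      rw [bd_smul_zen]
    rw [Finset.sum_congr rfl this, Finset.sum_ite_eq F m s]
  have hfst : u.1 = 0 := by
    have : u.1 = ∑ n ∈ F, (s n • zen n).1 := map_sum fstL _ F
    rw [this]
    apply Finset.sum_eq_zero
    intro n _
    rw [pfst_smul, zen_fst, mul_zero]
  have hnu : ‖u‖ ≤ 1 / sq2 := by
    rw [Xnorm_def, hfst, abs_zero, add_zero, div_le_div_iff_of_pos_right sq2_pos]
    apply (BoundedContinuousFunction.norm_le zero_le_one).2
    intro m
    rw [Real.norm_eq_abs, hbu m]
    split
    · simp only [hs]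
      split <;> norm_num
    · norm_num
  calc ∑ n ∈ F, |f (zen n)| = f u := hfu.symm
    _ ≤ ‖f‖ * ‖u‖ := by
        have := f.le_opNorm u
        rw [Real.norm_eq_abs] at this
        exact (le_abs_self _).trans this
    _ ≤ 1 / sq2 := by rw [hf, one_mul]; exact hnu

lemma summable_b (f : XX →L[ℝ] ℝ) (hf : ‖f‖ = 1) : Summable (fun n => |f (zen n)|) := by
  apply summable_of_sum_le (fun n => abs_nonneg _) (sum_b_le f hf)

lemma sq2_le_two : sq2 ≤ 2 := by nlinarith [sq2_sq, sq2_pos]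
lemma one_le_sq2 : 1 ≤ sq2 := by nlinarith [sq2_sq, sq2_pos]

lemma norm_le_one_iff (p : XX) : ‖p‖ ≤ 1 ↔ ‖bd p‖ + |p.1| ≤ sq2 := by
  rw [Xnorm_def, div_le_one sq2_pos]

lemma exists_almost_norming (f : XX →L[ℝ] ℝ) (hf : ‖f‖ = 1) {c : ℝ} (hc : c < 1) :
    ∃ x : XX, ‖x‖ ≤ 1 ∧ c < f x := by
  obtain ⟨x₀, hx₀, hx⟩ := f.exists_lt_apply_of_lt_opNorm (r := c) (by rw [hf]; exact hc)
  rw [Real.norm_eq_abs] at hx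
  rcases le_or_gt 0 (f x₀) with h | h
  · exact ⟨x₀, hx₀.le, by rwa [abs_of_nonneg h] at hx⟩
  · refine ⟨-x₀, by rw [norm_neg]; exact hx₀.le, ?_⟩
    rw [map_neg]
    rwa [abs_of_neg h] at hx

lemma slice_radius_ge (f : XX →L[ℝ] ℝ) (hf : ‖f‖ = 1) (α : ℝ) (hα : 0 < α) (z : XX) (r : ℝ)
    (hsub : {y ∈ Metric.closedBall (0:XX) 1 | 1 - α < f y} ⊆ Metric.closedBall z r) :
    1 ≤ r := by
  by_contra hr
  push_neg at hr
  set ε : ℝ := (1 - r) / 2 with hε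
  have hε0 : 0 < ε := by rw [hε]; linarith
  -- almost norming point
  obtain ⟨x, hx1, hx2⟩ := exists_almost_norming f hf (c := 1 - α/2) (by linarith)
  have hball : ‖bd x‖ + |x.1| ≤ sq2 := (norm_le_one_iff x).1 hx1
  -- choose a far coordinate
  have hb0 : Filter.Tendsto (fun n => |f (zen n)|) Filter.atTop (nhds 0) :=
    (summable_b f hf).tendsto_atTop_zero
  have hw0 : Filter.Tendsto (fun n => z.2 n) Filter.atTop (nhds 0) := tendsto_snd z
  have hev1 : ∀ᶠ n in Filter.atTop, |f (zen n)| < α / 8 := by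
    have := hb0.eventually (eventually_lt_nhds (by linarith : (0:ℝ) < α / 8))
    exact this
  have hev2 : ∀ᶠ n in Filter.atTop, |z.2 n| < ε := by
    have := hw0.eventually (eventually_abs_sub_lt 0 hε0)
    simpa using this
  obtain ⟨n, hbn, hwn⟩ := (hev1.and hev2).exists
  -- construct the perturbed point
  set v : ℝ := (if 0 ≤ bd z n then (-1:ℝ) else 1) * (sq2 - |x.1|) with hv
  set x' : XX := x + (v - bd x n) • zen n with hx'
  have hfst' : x'.1 = x.1 := by
    rw [hx', pfst_add, pfst_smul, zen_fst, mul_zero, add_zero]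
  have hbd' : ∀ m, bd x' m = if m = n then v else bd x m := by
    intro m
    rw [hx']
    have : bd (x + (v - bd x n) • zen n) = bd x + bd ((v - bd x n) • zen n) := bd_add _ _
    rw [this]
    have h2 : (bd x + bd ((v - bd x n) • zen n)) m = bd x m + bd ((v - bd x n) • zen n) m := rfl
    rw [h2, bd_smul_zen]
    split
    · rename_i h; subst h; ring
    · ring
  have habs : 0 ≤ sq2 - |x.1| := by
    have := norm_nonneg (bd x); linarith
  have hvabs : |v| = sq2 - |x.1| := by
    rw [hv, abs_mul]
    split <;> simp [abs_of_nonneg habs]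
  have hx'ball : ‖x'‖ ≤ 1 := by
    rw [norm_le_one_iff, hfst']
    have : ‖bd x'‖ ≤ sq2 - |x.1| := by
      apply (BoundedContinuousFunction.norm_le habs).2
      intro m
      rw [Real.norm_eq_abs, hbd' m]
      split
      · rw [hvabs]
      · have h1 : |bd x m| ≤ ‖bd x‖ := by
          simpa [Real.norm_eq_abs] using (bd x).norm_coe_le_norm m
        linarith [abs_nonneg x.1]
    linarith
  have hbdxn : |bd x n| ≤ sq2 := by
    have h1 : |bd x n| ≤ ‖bd x‖ := by
      simpa [Real.norm_eq_abs] using (bd x).norm_coe_le_norm n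
    linarith [abs_nonneg x.1]
  have hfx' : 1 - α < f x' := by
    rw [hx', map_add, map_smul]
    have h1 : |(v - bd x n) * f (zen n)| ≤ 2 * sq2 * (α / 8) := by
      rw [abs_mul]
      apply mul_le_mul (by
        calc |v - bd x n| ≤ |v| + |bd x n| := abs_sub _ _
          _ ≤ 2 * sq2 := by rw [hvabs]; linarith [abs_nonneg x.1]) hbn.le (abs_nonneg _)
        (by linarith [sq2_pos])
    have h2 : 2 * sq2 * (α / 8) ≤ α / 2 := by nlinarith [sq2_le_two, hα]
    have h3 : -(α/2) ≤ (v - bd x n) * f (zen n) := by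
      have := neg_abs_le ((v - bd x n) * f (zen n)); linarith
    simp only [smul_eq_mul]
    linarith
  have hx'mem : x' ∈ {y ∈ Metric.closedBall (0:XX) 1 | 1 - α < f y} := by
    constructor
    · rw [Metric.mem_closedBall, dist_zero_right]; exact hx'ball
    · exact hfx'
  have hdist := hsub hx'mem
  rw [Metric.mem_closedBall, dist_eq_norm] at hdist
  -- lower bound on the distance
  have hlow : (sq2 - ε) / sq2 ≤ ‖x' - z‖ := by
    rw [Xnorm_def, div_le_div_iff_of_pos_right sq2_pos]
    have hbdn : bd (x' - z) n = v - bd z n := by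
      have h1 : bd (x' - z) = bd x' - bd z := bd_sub _ _
      have h2 : (bd x' - bd z) n = bd x' n - bd z n := rfl
      rw [h1, h2, hbd' n, if_pos rfl]
    have hopp : sq2 - |x.1| + |bd z n| ≤ |v - bd z n| := by
      rcases le_or_gt 0 (bd z n) with h | h
      · rw [hv, if_pos h]
        rw [abs_of_nonpos (by nlinarith [abs_of_nonneg h] : (-1:ℝ) * (sq2 - |x.1|) - bd z n ≤ 0)]
        rw [abs_of_nonneg h]
        ring_nf
        linarith
      · rw [hv, if_neg (not_le.2 h)]
        rw [abs_of_nonneg (by nlinarith [abs_of_neg h] : (0:ℝ) ≤ 1 * (sq2 - |x.1|) - bd z n)]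
        rw [abs_of_neg h]
        ring_nf
        linarith
    have hbz : |z.1| - |z.2 n| ≤ |bd z n| := by
      have : bd z n = z.1 + z.2 n := bd_apply z n
      rw [this]
      have h0 : z.1 = (z.1 + z.2 n) + (-(z.2 n)) := by ring
      have := abs_add_le (z.1 + z.2 n) (-(z.2 n))
      rw [← h0, abs_neg] at this
      linarith
    have hcoord : |bd (x' - z) n| ≤ ‖bd (x' - z)‖ := by
      simpa [Real.norm_eq_abs] using (bd (x' - z)).norm_coe_le_norm n
    have hfstd : |x.1| - |z.1| ≤ |(x' - z).1| := by
      have h1 : (x' - z).1 = x.1 - z.1 := by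
        have : (x' - z).1 = x'.1 - z.1 := rfl
        rw [this, hfst']
      rw [h1]
      exact abs_sub_abs_le_abs_sub _ _
    rw [hbdn] at hcoord
    linarith
  have : (sq2 - ε)/sq2 ≤ r := le_trans hlow hdist
  have hfin : 1 - ε ≤ (sq2 - ε)/sq2 := by
    rw [le_div_iff₀ sq2_pos]
    nlinarith [one_le_sq2, hε0]
  linarith

lemma slice_diam_le :
    ∀ p ∈ {y ∈ Metric.closedBall (0:XX) 1 | 1 - 1/4 < φ₀ y},
    ∀ q ∈ {y ∈ Metric.closedBall (0:XX) 1 | 1 - 1/4 < φ₀ y},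
    dist p q ≤ 11/8 := by
  have key : ∀ p : XX, p ∈ {y ∈ Metric.closedBall (0:XX) 1 | 1 - 1/4 < φ₀ y} →
      ‖bd p‖ + |p.1| ≤ sq2 ∧ 3/4 < sq2 * p.1 ∧ |p.1| = p.1 ∧ 2 * p.1 ≤ sq2 := by
    intro p hp
    obtain ⟨hp1, hp2⟩ := hp
    rw [Metric.mem_closedBall, dist_zero_right, norm_le_one_iff] at hp1
    rw [φ₀_apply] at hp2
    have h1 : 3/4 < sq2 * p.1 := by linarith
    have hpos : 0 < p.1 := by nlinarith [sq2_le_two, sq2_pos]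
    have habs : |p.1| = p.1 := abs_of_pos hpos
    have h2 : 2 * p.1 ≤ sq2 := by
      have h5 := abs_fst_le p
      rw [habs] at h5 hp1
      linarith
    exact ⟨hp1, h1, habs, h2⟩
  intro p hp q hq
  obtain ⟨hp1, hp2, hp3, hp4⟩ := key p hp
  obtain ⟨hq1, hq2, hq3, hq4⟩ := key q hq
  rw [dist_eq_norm, Xnorm_def, div_le_iff₀ sq2_pos]
  have hbd : ‖bd (p - q)‖ ≤ ‖bd p‖ + ‖bd q‖ := by
    rw [bd_sub]; exact norm_sub_le _ _
  have hfst : (p - q).1 = p.1 - q.1 := rfl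
  have habs : |p.1 - q.1| * sq2 ≤ 1/4 := by
    rcases abs_cases (p.1 - q.1) with ⟨h, _⟩ | ⟨h, _⟩ <;> rw [h] <;> nlinarith [sq2_sq, sq2_pos]
  rw [hfst]
  nlinarith [sq2_sq, sq2_pos, abs_nonneg (p.1 - q.1)]

end ConstructionNamespaceX


theorem stmt_19 :
    ∃ (X : Type) (_ : NormedAddCommGroup X) (_ : NormedSpace ℝ X) (_ : CompleteSpace X)
      (_ : Nontrivial X),
      -- `X` has the `r`-big slice property: every slice of `B_X` has radius one
      (∀ S : Set X, IsSlice X S → radiusSet X S = 1) ∧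
      (∃ φ : X →L[ℝ] ℝ, ‖φ‖ = 1 ∧
        sInf {d : ℝ | ∃ α > (0 : ℝ), d = Metric.diam (sliceSet X φ α)} ≤ Real.sqrt 2) ∧
      -- in particular, not every slice of the unit ball of `X` has diameter two
      ¬ ∀ S : Set X, IsSlice X S → Metric.diam S = 2 := by
  have hdiam : Metric.diam (sliceSet XX φ₀ (1/4)) ≤ 11/8 := by
    apply Metric.diam_le_of_forall_dist_le (by norm_num)
    exact slice_diam_le
  refine ⟨XX, inferInstance, inferInstance, inferInstance, inferInstance, ?_, ?_, ?_⟩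
  · rintro S ⟨f, hf, α, hα, rfl⟩
    have hmemR : (1:ℝ) ∈ {r : ℝ | 0 < r ∧ ∃ x : XX, sliceSet XX f α ⊆ Metric.closedBall x r} :=
      ⟨one_pos, 0, fun y hy => hy.1⟩
    rw [radiusSet]
    apply le_antisymm
    · exact csInf_le ⟨0, fun r hr => hr.1.le⟩ hmemR
    · apply le_csInf ⟨1, hmemR⟩
      rintro r ⟨hr0, x, hx⟩
      apply slice_radius_ge f hf α hα x r
      rw [sliceSet] at hx
      exact hx
  · refine ⟨φ₀, φ₀_norm, ?_⟩
    have hmem : Metric.diam (sliceSet XX φ₀ (1/4)) ∈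
        {d : ℝ | ∃ α > (0 : ℝ), d = Metric.diam (sliceSet XX φ₀ α)} :=
      ⟨1/4, by norm_num, rfl⟩
    have h1 := csInf_le ⟨0, fun d hd => by
      obtain ⟨α, hα, rfl⟩ := hd; exact Metric.diam_nonneg⟩ hmem
    have h2 : (11/8 : ℝ) ≤ Real.sqrt 2 := by
      have := sq2_sq
      have := sq2_pos
      rw [show Real.sqrt 2 = sq2 from rfl]
      nlinarith
    linarith
  · intro h
    have h2 := h (sliceSet XX φ₀ (1/4)) ⟨φ₀, φ₀_norm, 1/4, by norm_num, rfl⟩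
    rw [h2] at hdiam
    norm_num at hdiam
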